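/- Let G be a finite abelian group, r a positive integer, and ψ : G^r → G a surjective homomorphism. Define the family F of functions G → [0,1] consisting of all convex combinations of generalized convolutions (u_1,...,u_r)*_ψ with u_i : G^{r-1} → [0,1]. Then F is closed under pointwise multiplication. -/

import Mathlib

open Finset

/-- Generalized convolution `(u_1,...,u_r)*_ψ(x) = E[∏_i u_i(y_{[r]\{i}}) | y ∈ G^r, ψ(y) = x]`. -/
noncomputable def genConv {G : Type*} [Fintype G] [AddCommGroup G] [DecidableEq G]
    (r : ℕ) (ψ : (Fin r → G) →+ G)
    (u : (i : Fin r) → ({j : Fin r // j ≠ i} → G) → ℝ) (x : G) : ℝ :=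
  (∑ y ∈ Finset.univ.filter (fun y : Fin r → G => ψ y = x),
      ∏ i : Fin r, u i (fun j => y j.1)) /
    ((Finset.univ.filter (fun y : Fin r → G => ψ y = x)).card : ℝ)

/-- The family `F` of all convex combinations of generalized convolutions
`(u_1,...,u_r)*_ψ` with `u_i : G^{r-1} → [0,1]`. -/
noncomputable def convFam {G : Type*} [Fintype G] [AddCommGroup G] [DecidableEq G]
    (r : ℕ) (ψ : (Fin r → G) →+ G) : Set (G → ℝ) :=
  { φ | ∃ (m : ℕ) (lam : Fin m → ℝ)
      (u : Fin m → (i : Fin r) → ({j : Fin r // j ≠ i} → G) → ℝ),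
      (∀ a, 0 ≤ lam a) ∧ (∑ a, lam a = 1) ∧
      (∀ a i w, u a i w ∈ Set.Icc (0:ℝ) 1) ∧
      φ = fun x => ∑ a, lam a * genConv r ψ (u a) x }

private lemma fiber_card {G : Type*} [Fintype G] [AddCommGroup G] [DecidableEq G]
    {r : ℕ} (ψ : (Fin r → G) →+ G) {x : G} (y₀ : Fin r → G) (hy₀ : ψ y₀ = x) :
    (univ.filter (fun y : Fin r → G => ψ y = x)).card
      = (univ.filter (fun t : Fin r → G => ψ t = 0)).card := by
  apply Finset.card_nbij' (fun y => y - y₀) (fun t => t + y₀)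
  · intro y hy
    simp only [mem_coe, mem_filter, mem_univ, true_and] at hy ⊢
    simp [map_sub, hy, hy₀]
  · intro t ht
    simp only [mem_coe, mem_filter, mem_univ, true_and] at ht ⊢
    simp [map_add, ht, hy₀]
  · intro y _; simp
  · intro t _; simp

private lemma genConv_mul_genConv {G : Type*} [Fintype G] [AddCommGroup G] [DecidableEq G]
    {r : ℕ} (ψ : (Fin r → G) →+ G) (hψ : Function.Surjective ψ)
    (u v : (i : Fin r) → ({j : Fin r // j ≠ i} → G) → ℝ) (x : G) :
    genConv r ψ u x * genConv r ψ v x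
      = ∑ t ∈ univ.filter (fun t : Fin r → G => ψ t = 0),
          (1 / ((univ.filter (fun t : Fin r → G => ψ t = 0)).card : ℝ)) *
            genConv r ψ (fun i s => u i s * v i (fun j => s j + t j.1)) x := by
  obtain ⟨y₀, hy₀⟩ := hψ x
  set K := univ.filter (fun t : Fin r → G => ψ t = 0) with hK
  set F := univ.filter (fun y : Fin r → G => ψ y = x) with hF
  have hcard : F.card = K.card := fiber_card ψ y₀ hy₀
  have key : (∑ y ∈ F, ∏ i, u i (fun j => y j.1)) * (∑ z ∈ F, ∏ i, v i (fun j => z j.1))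
      = ∑ t ∈ K, ∑ y ∈ F, ∏ i, (u i (fun j => y j.1) * v i (fun j => y j.1 + t j.1)) := by
    rw [Finset.sum_mul_sum]
    conv_rhs => rw [Finset.sum_comm]
    apply Finset.sum_congr rfl
    intro y hy
    have hyF : ψ y = x := by simpa [hF] using hy
    have h2 : (∑ z ∈ F, ∏ i, v i (fun j => z j.1))
        = ∑ t ∈ K, ∏ i, v i (fun j => y j.1 + t j.1) := by
      apply Finset.sum_nbij' (fun z => z - y) (fun t => y + t)
      · intro z hz
        simp only [hF, hK, mem_filter, mem_univ, true_and] at hz ⊢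
        simp [map_sub, hz, hyF]
      · intro t ht
        simp only [hF, hK, mem_filter, mem_univ, true_and] at ht ⊢
        simp [map_add, ht, hyF]
      · intro z _; abel
      · intro t _; abel
      · intro z hz
        apply Finset.prod_congr rfl
        intro i _
        congr 1
        funext j
        simp only [Pi.sub_apply]
        abel
    rw [← Finset.mul_sum, h2, Finset.mul_sum]
    apply Finset.sum_congr rfl
    intro t _
    rw [← Finset.prod_mul_distrib]
  unfold genConv
  beta_reduce
  rw [hcard, div_mul_div_comm, key, Finset.sum_div]
  apply Finset.sum_congr rfl
  intro t _
  rw [← hF]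
  field_simp

/-- The family of convex combinations of generalized convolutions is closed under
pointwise multiplication. -/
theorem convFam_mul_mem {G : Type*} [Fintype G] [AddCommGroup G] [DecidableEq G]
    (r : ℕ) (hr : 0 < r) (ψ : (Fin r → G) →+ G) (hψ : Function.Surjective ψ)
    (φ₁ φ₂ : G → ℝ) (h₁ : φ₁ ∈ convFam r ψ) (h₂ : φ₂ ∈ convFam r ψ) :
    (fun x => φ₁ x * φ₂ x) ∈ convFam r ψ := by
  classical
  obtain ⟨m, lam, u, hlam, hlams, hu, rfl⟩ := h₁
  obtain ⟨n, mu, v, hmu, hmus, hv, rfl⟩ := h₂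
  set K := univ.filter (fun t : Fin r → G => ψ t = 0) with hK
  set N : ℝ := (K.card : ℝ) with hNdef
  have hN : 0 < N := by
    have h0 : (0 : Fin r → G) ∈ K := by simp [hK]
    have hc := Finset.card_pos.2 ⟨_, h0⟩
    rw [hNdef]
    exact_mod_cast hc
  have hNne : N ≠ 0 := ne_of_gt hN
  set T := Fin m × Fin n × (Fin r → G) with hT
  let e : Fin (Fintype.card T) ≃ T := (Fintype.equivFin T).symm
  let w : T → (i : Fin r) → ({j : Fin r // j ≠ i} → G) → ℝ :=
    fun p i s => u p.1 i s * v p.2.1 i (fun j => s j + p.2.2 j.1)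
  let lam' : T → ℝ := fun p => if ψ p.2.2 = 0 then lam p.1 * mu p.2.1 / N else 0
  refine ⟨Fintype.card T, fun k => lam' (e k), fun k => w (e k), ?_, ?_, ?_, ?_⟩
  · intro k
    dsimp only [lam']
    split
    · exact div_nonneg (mul_nonneg (hlam _) (hmu _)) hN.le
    · exact le_refl 0
  · rw [Equiv.sum_comp e lam']
    have h1 : ∑ p : T, lam' p = ∑ a, ∑ b, ∑ t ∈ K, lam a * mu b / N := by
      rw [Fintype.sum_prod_type]
      refine Finset.sum_congr rfl fun a _ => ?_
      rw [Fintype.sum_prod_type]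
      refine Finset.sum_congr rfl fun b _ => ?_
      rw [hK, Finset.sum_filter]
    rw [h1]
    calc ∑ a, ∑ b, ∑ _t ∈ K, lam a * mu b / N
        = ∑ a, ∑ b, lam a * mu b := by
          refine Finset.sum_congr rfl fun a _ => Finset.sum_congr rfl fun b _ => ?_
          rw [Finset.sum_const, nsmul_eq_mul, ← hNdef]
          field_simp
      _ = 1 := by
          simp only [← Finset.mul_sum, ← Finset.sum_mul, hlams, hmus, one_mul]
  · intro k i s
    dsimp only [w]
    exact ⟨mul_nonneg (hu _ i s).1 (hv _ i _).1,
      mul_le_one₀ (hu _ i s).2 (hv _ i _).1 (hv _ i _).2⟩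
  · funext x
    rw [Equiv.sum_comp e (fun p => lam' p * genConv r ψ (w p) x)]
    rw [Finset.sum_mul_sum]
    rw [Fintype.sum_prod_type]
    refine Finset.sum_congr rfl fun a _ => ?_
    rw [Fintype.sum_prod_type]
    refine Finset.sum_congr rfl fun b _ => ?_
    have hmul : genConv r ψ (u a) x * genConv r ψ (v b) x
        = ∑ t ∈ K, (1 / N) * genConv r ψ (fun i s => u a i s * v b i (fun j => s j + t j.1)) x :=
      genConv_mul_genConv ψ hψ (u a) (v b) x
    calc lam a * genConv r ψ (u a) x * (mu b * genConv r ψ (v b) x)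
        = lam a * mu b * (genConv r ψ (u a) x * genConv r ψ (v b) x) := by ring
      _ = ∑ t ∈ K, lam a * mu b / N * genConv r ψ (w (a, b, t)) x := by
          rw [hmul, Finset.mul_sum]
          refine Finset.sum_congr rfl fun t _ => ?_
          dsimp only [w]; ring
      _ = ∑ t : Fin r → G, lam' (a, b, t) * genConv r ψ (w (a, b, t)) x := by
          rw [hK, Finset.sum_filter]
          refine Finset.sum_congr rfl fun t _ => ?_
          dsimp only [lam']
          split <;> simp
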